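/- The cover RU = {B(p, 3R/2) : p ∈ RG⁺} of D_1 by open balls of radius 3R/2 has multiplicity at most 4; that is, every point of D_1 lies in at most 4 of these balls. -/

import Mathlib

open scoped BigOperators

/-- The space of persistence diagrams on one point: `T ∪ {Δ}`, where
`T = {(x₁,x₂) : x₂ > x₁ ≥ 0}` and `none` plays the role of the diagonal `Δ`. -/
abbrev D1 : Type := Option {p : ℝ × ℝ // 0 ≤ p.1 ∧ p.1 < p.2}

/-- The bottleneck distance on `D1`. -/
noncomputable def dB : D1 → D1 → ℝ
  | none, none => 0
  | none, some p => (p.1.2 - p.1.1) / 2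
  | some p, none => (p.1.2 - p.1.1) / 2
  | some p, some q =>
      min (max |p.1.1 - q.1.1| |p.1.2 - q.1.2|)
        (max ((p.1.2 - p.1.1) / 2) ((q.1.2 - q.1.1) / 2))

/-- max over coordinates. -/
noncomputable def dBmax {N : ℕ} (x y : Fin N → D1) : ℝ :=
  Finset.univ.fold max 0 (fun i => dB (x i) (y i))

/-- bottleneck distance on tuples, min over permutations. -/
noncomputable def dBn {N : ℕ} (x y : Fin N → D1) : ℝ :=
  Finset.univ.inf' Finset.univ_nonempty
    (fun ψ : Equiv.Perm (Fin N) => dBmax x (y ∘ ψ))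

def RGplus (R : ℝ) : Set D1 :=
  insert none {d : D1 | ∃ p, d = some p ∧ ∃ m k : ℕ,
    Odd m ∧ 1 ≤ m ∧ Even k ∧ 4 ≤ k ∧ m + 3 ≤ k ∧ p.1 = ((m : ℝ) * R, (k : ℝ) * R)}

def inBox (L : ℝ) : D1 → Prop
  | none => True
  | some p => p.1.1 ∈ Set.Icc 0 L ∧ p.1.2 ∈ Set.Icc 0 L

/-- Grid characterization of non-diagonal elements of `RGplus`. -/
lemma mem_RGplus_some' {R : ℝ} {p : {p : ℝ × ℝ // 0 ≤ p.1 ∧ p.1 < p.2}}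
    (h : (some p : D1) ∈ RGplus R) :
    ∃ m k : ℕ, Odd m ∧ 1 ≤ m ∧ Even k ∧ 4 ≤ k ∧ m + 3 ≤ k ∧
      p.1 = ((m : ℝ) * R, (k : ℝ) * R) := by
  rcases h with h | h
  · exact absurd h (by simp)
  · obtain ⟨p', hp', hrest⟩ := h
    cases Option.some.inj hp'
    exact hrest

/-- A set of naturals of fixed parity whose multiples of `R` lie in an open interval
of length `3R` has all elements equal to `sInf` or `sInf + 2`. -/
lemma two_vals {R c : ℝ} (hR : 0 < R) (A : Set ℕ)
    (hpar : ∀ m ∈ A, ∀ n ∈ A, m % 2 = n % 2)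
    (hint : ∀ m ∈ A, |(m : ℝ) * R - c| < 3 * R / 2) :
    ∀ m ∈ A, m = sInf A ∨ m = sInf A + 2 := by
  intro m hm
  have ha : sInf A ∈ A := Nat.sInf_mem ⟨m, hm⟩
  have h1 : sInf A ≤ m := Nat.sInf_le hm
  have h2 := hint m hm
  have h3 := hint _ ha
  rw [abs_lt] at h2 h3
  have h4 : (m : ℝ) * R < (((sInf A : ℕ) : ℝ) + 3) * R := by nlinarith
  have h5 : (m : ℝ) < ((sInf A : ℕ) : ℝ) + 3 := (mul_lt_mul_iff_of_pos_right hR).mp h4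
  have h6 : m < sInf A + 3 := by exact_mod_cast h5
  have h7 := hpar m hm _ ha
  omega

/-- Encoding of diagram points by grid coordinates. -/
noncomputable def Fenc (R : ℝ) : D1 → ℕ × ℕ
  | none => (0, 0)
  | some p => (⌊p.1.1 / R⌋₊, ⌊p.1.2 / R⌋₊)

lemma Fenc_none (R : ℝ) : Fenc R none = (0, 0) := rfl

lemma Fenc_val (R : ℝ) (hR : 0 < R) (p : {p : ℝ × ℝ // 0 ≤ p.1 ∧ p.1 < p.2})
    (m k : ℕ) (hpe : p.1 = ((m : ℝ) * R, (k : ℝ) * R)) :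
    Fenc R (some p) = (m, k) := by
  have h1 : p.1.1 / R = (m : ℝ) := by
    rw [hpe]; exact mul_div_cancel_right₀ _ hR.ne'
  have h2 : p.1.2 / R = (k : ℝ) := by
    rw [hpe]; exact mul_div_cancel_right₀ _ hR.ne'
  show (⌊p.1.1 / R⌋₊, ⌊p.1.2 / R⌋₊) = (m, k)
  rw [h1, h2, Nat.floor_natCast, Nat.floor_natCast]

/-- The cover of `D1` by open `3R/2`-balls centered at `RG⁺` has multiplicity at most `4`. -/
theorem RGplus_cover_multiplicity_le_four (R : ℝ) (hR : 0 < R) (z : D1) :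
    {p | p ∈ RGplus R ∧ dB p z < 3 * R / 2}.Finite ∧
    {p | p ∈ RGplus R ∧ dB p z < 3 * R / 2}.ncard ≤ 4 := by
  classical
  cases z with
  | none =>
    set S : Set D1 := {p | p ∈ RGplus R ∧ dB p none < 3 * R / 2} with hSdef
    have hsub : S ⊆ {none} := by
      rintro p ⟨hp, hd⟩
      cases p with
      | none => rfl
      | some p =>
        exfalso
        obtain ⟨m, k, hmO, hm1, hkE, hk4, hmk, hpe⟩ := mem_RGplus_some' hp
        have hd' : (p.1.2 - p.1.1) / 2 < 3 * R / 2 := hd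
        have hp1 : p.1.1 = (m : ℝ) * R := by rw [hpe]
        have hp2 : p.1.2 = (k : ℝ) * R := by rw [hpe]
        have hk' : (m : ℝ) + 3 ≤ (k : ℝ) := by exact_mod_cast hmk
        rw [hp1, hp2] at hd'
        nlinarith
    refine ⟨(Set.finite_singleton _).subset hsub, ?_⟩
    have := Set.ncard_le_ncard hsub (Set.finite_singleton _)
    simpa using this.trans (by simp)
  | some q =>
    set S : Set D1 := {p | p ∈ RGplus R ∧ dB p (some q) < 3 * R / 2} with hSdef
    have hgrid : ∀ p, (some p : D1) ∈ S → ∃ m k : ℕ, Odd m ∧ Even k ∧ m + 3 ≤ k ∧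
        p.1 = ((m : ℝ) * R, (k : ℝ) * R) ∧
        |(m : ℝ) * R - q.1.1| < 3 * R / 2 ∧ |(k : ℝ) * R - q.1.2| < 3 * R / 2 := by
      rintro p ⟨hp, hd⟩
      obtain ⟨m, k, hmO, hm1, hkE, hk4, hmk, hpe⟩ := mem_RGplus_some' hp
      have hp1 : p.1.1 = (m : ℝ) * R := by rw [hpe]
      have hp2 : p.1.2 = (k : ℝ) * R := by rw [hpe]
      have hk' : (m : ℝ) + 3 ≤ (k : ℝ) := by exact_mod_cast hmk
      have hd' : min (max |p.1.1 - q.1.1| |p.1.2 - q.1.2|)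
          (max ((p.1.2 - p.1.1) / 2) ((q.1.2 - q.1.1) / 2)) < 3 * R / 2 := hd
      have hge : 3 * R / 2 ≤ max ((p.1.2 - p.1.1) / 2) ((q.1.2 - q.1.1) / 2) :=
        le_max_of_le_left (by rw [hp1, hp2]; nlinarith)
      have hlt : max |p.1.1 - q.1.1| |p.1.2 - q.1.2| < 3 * R / 2 := by
        rcases min_lt_iff.mp hd' with h | h
        · exact h
        · linarith
      rw [max_lt_iff, hp1, hp2] at hlt
      exact ⟨m, k, hmO, hkE, hmk, hpe, hlt.1, hlt.2⟩
    have hnone : (none : D1) ∈ S → q.1.2 - q.1.1 < 3 * R := by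
      rintro ⟨-, hd⟩
      have hd' : (q.1.2 - q.1.1) / 2 < 3 * R / 2 := hd
      linarith
    have hinj : Set.InjOn (Fenc R) S := by
      rintro p hp p' hp' he
      cases p with
      | none =>
        cases p' with
        | none => rfl
        | some p' =>
          exfalso
          obtain ⟨m, k, hmO, -, -, hpe, -, -⟩ := hgrid p' hp'
          rw [Fenc_none, Fenc_val R hR p' m k hpe] at he
          have hm0 : m = 0 := (Prod.mk.injEq _ _ _ _ ▸ he).1.symm
          rw [hm0] at hmO
          simp at hmO
      | some p =>
        cases p' with
        | none =>
          exfalso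
          obtain ⟨m, k, hmO, -, -, hpe, -, -⟩ := hgrid p hp
          rw [Fenc_none, Fenc_val R hR p m k hpe] at he
          have hm0 : m = 0 := (Prod.mk.injEq _ _ _ _ ▸ he).1
          rw [hm0] at hmO
          simp at hmO
        | some p' =>
          obtain ⟨m, k, -, -, -, hpe, -, -⟩ := hgrid p hp
          obtain ⟨m', k', -, -, -, hpe', -, -⟩ := hgrid p' hp'
          rw [Fenc_val R hR p m k hpe, Fenc_val R hR p' m' k' hpe'] at he
          have h1 : m = m' := congrArg Prod.fst he
          have h2 : k = k' := congrArg Prod.snd he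
          subst h1; subst h2
          exact congrArg some (Subtype.ext (hpe.trans hpe'.symm))
    set I : Set (ℕ × ℕ) := Fenc R '' S with hIdef
    have hchar : ∀ m k : ℕ, (m, k) ∈ I →
        (m = 0 ∧ k = 0 ∧ (none : D1) ∈ S) ∨
        (Odd m ∧ Even k ∧ m + 3 ≤ k ∧
          |(m : ℝ) * R - q.1.1| < 3 * R / 2 ∧ |(k : ℝ) * R - q.1.2| < 3 * R / 2) := by
      rintro m k ⟨p, hpS, hFp⟩
      cases p with
      | none =>
        left
        rw [Fenc_none] at hFp
        have h1 : 0 = m := congrArg Prod.fst hFp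
        have h2 : 0 = k := congrArg Prod.snd hFp
        exact ⟨h1.symm, h2.symm, hpS⟩
      | some p =>
        right
        obtain ⟨m', k', h1, h2, h3, hpe, h4, h5⟩ := hgrid p hpS
        rw [Fenc_val R hR p m' k' hpe] at hFp
        have hm : m' = m := congrArg Prod.fst hFp
        have hk : k' = k := congrArg Prod.snd hFp
        subst hm; subst hk
        exact ⟨h1, h2, h3, h4, h5⟩
    set A : Set ℕ := {m | ∃ k, (m, k) ∈ I ∧ m ≠ 0} with hAdef
    set B : Set ℕ := {k | ∃ m, (m, k) ∈ I ∧ m ≠ 0} with hBdef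
    have hAodd : ∀ m ∈ A, Odd m := by
      rintro m ⟨k, hmk, hm0⟩
      rcases hchar m k hmk with ⟨rfl, -, -⟩ | ⟨hmO, -⟩
      · exact absurd rfl hm0
      · exact hmO
    have hAint : ∀ m ∈ A, |(m : ℝ) * R - q.1.1| < 3 * R / 2 := by
      rintro m ⟨k, hmk, hm0⟩
      rcases hchar m k hmk with ⟨rfl, -, -⟩ | ⟨-, -, -, h, -⟩
      · exact absurd rfl hm0
      · exact h
    have hBeven : ∀ k ∈ B, Even k := by
      rintro k ⟨m, hmk, hm0⟩
      rcases hchar m k hmk with ⟨rfl, -, -⟩ | ⟨-, hkE, -⟩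
      · exact absurd rfl hm0
      · exact hkE
    have hBint : ∀ k ∈ B, |(k : ℝ) * R - q.1.2| < 3 * R / 2 := by
      rintro k ⟨m, hmk, hm0⟩
      rcases hchar m k hmk with ⟨rfl, -, -⟩ | ⟨-, -, -, -, h⟩
      · exact absurd rfl hm0
      · exact h
    have hA2 := two_vals hR A (fun m hm n hn => by
      rw [Nat.odd_iff.mp (hAodd m hm), Nat.odd_iff.mp (hAodd n hn)]) hAint
    have hB2 := two_vals hR B (fun m hm n hn => by
      rw [Nat.even_iff.mp (hBeven m hm), Nat.even_iff.mp (hBeven n hn)]) hBint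
    set a : ℕ := sInf A with hadef
    set b : ℕ := sInf B with hbdef
    set T : Set (ℕ × ℕ) := {(0, 0), (a, b), (a, b + 2), (a + 2, b), (a + 2, b + 2)} with hTdef
    have hIT : I ⊆ T := by
      rintro ⟨m, k⟩ hmk
      rcases hchar m k hmk with ⟨rfl, rfl, -⟩ | ⟨hmO, -, -, -, -⟩
      · exact Set.mem_insert _ _
      · have hm0 : m ≠ 0 := by
          rcases hmO with ⟨t, ht⟩; omega
        have hmA : m ∈ A := ⟨k, hmk, hm0⟩
        have hkB : k ∈ B := ⟨m, hmk, hm0⟩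
        rcases hA2 m hmA with rfl | rfl <;> rcases hB2 k hkB with rfl | rfl <;>
          simp [hTdef]
    have hTfin : T.Finite := by
      apply Set.Finite.insert
      apply Set.Finite.insert
      apply Set.Finite.insert
      apply Set.Finite.insert
      exact Set.finite_singleton _
    have hTcard : T.ncard ≤ 5 := by
      apply le_trans (Set.ncard_insert_le _ _)
      have h4 : ({(a, b), (a, b + 2), (a + 2, b), (a + 2, b + 2)} : Set (ℕ × ℕ)).ncard ≤ 4 := by
        apply le_trans (Set.ncard_insert_le _ _)
        have h3 : ({(a, b + 2), (a + 2, b), (a + 2, b + 2)} : Set (ℕ × ℕ)).ncard ≤ 3 := by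
          apply le_trans (Set.ncard_insert_le _ _)
          have h2 : ({(a + 2, b), (a + 2, b + 2)} : Set (ℕ × ℕ)).ncard ≤ 2 := by
            apply le_trans (Set.ncard_insert_le _ _)
            simp
          omega
        omega
      omega
    have hIfin : I.Finite := hTfin.subset hIT
    have hSfin : S.Finite := Set.Finite.of_finite_image hIfin hinj
    have hcardeq : S.ncard = I.ncard := (Set.ncard_image_of_injOn hinj).symm
    refine ⟨hSfin, ?_⟩
    by_contra hc
    push_neg at hc
    have h5 : 5 ≤ I.ncard := by omega
    have hEq : I = T := Set.eq_of_subset_of_ncard_le hIT (le_trans hTcard h5) hTfin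
    have h00 : ((0, 0) : ℕ × ℕ) ∈ I := by rw [hEq]; exact Set.mem_insert _ _
    have hab2 : ((a, b + 2) : ℕ × ℕ) ∈ I := by rw [hEq]; simp [hTdef]
    have ha2b : ((a + 2, b) : ℕ × ℕ) ∈ I := by rw [hEq]; simp [hTdef]
    have hyx : q.1.2 - q.1.1 < 3 * R := by
      rcases hchar 0 0 h00 with ⟨-, -, hn⟩ | ⟨hO, -⟩
      · exact hnone hn
      · simp at hO
    rcases hchar a (b + 2) hab2 with ⟨-, habs, -⟩ | ⟨haO, -, -, hax, hb2y⟩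
    · omega
    rcases hchar (a + 2) b ha2b with ⟨habs, -, -⟩ | ⟨-, -, hab, -, hby⟩
    · omega
    rw [abs_lt] at hax hb2y
    push_cast at hb2y
    have hb' : (a : ℝ) + 5 ≤ (b : ℝ) := by exact_mod_cast hab
    nlinarith [hax.1, hb2y.2, hb', hyx, hR]
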